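/- Let x : ℕ → ℝ be a sequence that attains its infimum s (i.e., s = x i₀ for some i₀ and x i ≥ s for all i). Let T₀ > 0 and suppose the series Σ₀ = ∑_{i} exp(−x i / T₀) converges. Then for every T with 0 < T ≤ T₀, the series ∑_{i} exp(−x i / T) converges, and s − T·(s/T₀ + log Σ₀) ≤ −T·log(∑_{i} exp(−x i / T)) ≤ s. -/

import Mathlib

/-- **Softmin two-sided estimate (countable case).**
Let `x : ℕ → ℝ` attain its infimum `s`, let `T₀ > 0` and suppose the series
`Σ₀ = ∑ i, exp (-x i / T₀)` converges.  Then for every `0 < T ≤ T₀` the series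
`∑ i, exp (-x i / T)` converges and the softmin `-T * log (∑ i, exp (-x i / T))`
satisfies `s - T * (s / T₀ + log Σ₀) ≤ softmin ≤ s`. -/
theorem softmin_bounds_of_summable (x : ℕ → ℝ) (s : ℝ) (i₀ : ℕ) (h₀ : s = x i₀)
    (hmin : ∀ i, s ≤ x i) (T₀ : ℝ) (hT₀ : 0 < T₀)
    (hsum : Summable fun i => Real.exp (-x i / T₀)) :
    ∀ T : ℝ, 0 < T → T ≤ T₀ →
      Summable (fun i => Real.exp (-x i / T)) ∧
      s - T * (s / T₀ + Real.log (∑' i, Real.exp (-x i / T₀))) ≤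
        -T * Real.log (∑' i, Real.exp (-x i / T)) ∧
      -T * Real.log (∑' i, Real.exp (-x i / T)) ≤ s := by
  intro T hT hTT₀
  -- pointwise bound: exp(-x i / T) ≤ exp(s/T₀ - s/T) * exp(-x i / T₀)
  have key : ∀ i, Real.exp (-x i / T) ≤
      Real.exp (s / T₀ - s / T) * Real.exp (-x i / T₀) := by
    intro i
    rw [← Real.exp_add]
    apply Real.exp_le_exp.2
    have h1 : (x i - s) / T₀ ≤ (x i - s) / T :=
      div_le_div_of_nonneg_left (by linarith [hmin i]) hT hTT₀
    have : -x i / T = -((x i - s)/T) - s/T := by ring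
    rw [this]
    have : s / T₀ - s / T + -x i / T₀ = -((x i - s)/T₀) - s/T := by ring
    rw [this]
    linarith
  have hsumT : Summable (fun i => Real.exp (-x i / T)) := by
    apply Summable.of_nonneg_of_le (fun i => (Real.exp_pos _).le) key
    exact hsum.mul_left _
  refine ⟨hsumT, ?_, ?_⟩
  · -- lower bound
    have hS0pos : 0 < ∑' i, Real.exp (-x i / T₀) :=
      Summable.tsum_pos hsum (fun i => (Real.exp_pos _).le) i₀ (Real.exp_pos _)
    have htle : (∑' i, Real.exp (-x i / T)) ≤
        Real.exp (s / T₀ - s / T) * ∑' i, Real.exp (-x i / T₀) := by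
      rw [← tsum_mul_left]
      exact Summable.tsum_le_tsum key hsumT (hsum.mul_left _)
    have hlog : Real.log (∑' i, Real.exp (-x i / T)) ≤
        (s / T₀ - s / T) + Real.log (∑' i, Real.exp (-x i / T₀)) := by
      calc Real.log (∑' i, Real.exp (-x i / T))
          ≤ Real.log (Real.exp (s / T₀ - s / T) * ∑' i, Real.exp (-x i / T₀)) :=
            Real.log_le_log (Summable.tsum_pos hsumT (fun i => (Real.exp_pos _).le) i₀
              (Real.exp_pos _)) htle
        _ = (s / T₀ - s / T) + Real.log (∑' i, Real.exp (-x i / T₀)) := by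
            rw [Real.log_mul (Real.exp_ne_zero _) (ne_of_gt hS0pos), Real.log_exp]
    have := mul_le_mul_of_nonneg_left hlog hT.le
    have hTs : T * (s / T) = s := by field_simp
    nlinarith [hTs, mul_comm T s]
  · -- upper bound
    have hle : Real.exp (-s / T) ≤ ∑' i, Real.exp (-x i / T) := by
      rw [h₀]
      exact Summable.le_tsum hsumT i₀ (fun i _ => (Real.exp_pos _).le)
    have hlog : -s / T ≤ Real.log (∑' i, Real.exp (-x i / T)) := by
      have := Real.log_le_log (Real.exp_pos _) hle
      rwa [Real.log_exp] at this
    have := mul_le_mul_of_nonneg_left hlog hT.le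
    have hTs : T * (-s / T) = -s := by field_simp
    nlinarith [hTs, mul_comm T s]
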